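/- Let (x₁,…,xₙ) ∈ Φⁿ \ {0} with n ≥ 3. If 0 ∈ x₁ ⊞ ⋯ ⊞ xₙ, then there exist indices j < k < ℓ such that 0 ∈ x_j ⊞ x_k ⊞ x_ℓ. -/

import Mathlib

open Complex Set

noncomputable section

/-- The unit circle `S¹ ⊂ ℂ`. -/
def unitCircle : Set ℂ := Metric.sphere 0 1

/-- The tropical phase hyperfield `Φ = S¹ ∪ {0} ⊂ ℂ`. -/
def Phi : Set ℂ := unitCircle ∪ {0}

/-- The smallest closed arc of `S¹` joining two non-zero, non-antipodal unit
complex numbers `x` and `y`: the set of phases of nonnegative combinations of `x,y`. -/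
def smallArc (x y : ℂ) : Set ℂ :=
  {z : ℂ | ∃ a b : ℝ, 0 ≤ a ∧ 0 ≤ b ∧ 0 < a + b ∧
    z = ((a : ℂ) * x + (b : ℂ) * y) / ((‖(a : ℂ) * x + (b : ℂ) * y‖ : ℝ) : ℂ)}

/-- Hyperaddition in the tropical phase hyperfield. -/
def hadd (x y : ℂ) : Set ℂ :=
  if x = 0 then {y} else if y = 0 then {x} else if y = -x then Phi else smallArc x y

/-- Iterated hypersum `x₁ ⊞ ⋯ ⊞ xₙ` (unions over intermediate choices). -/
def haddList : List ℂ → Set ℂ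
  | [] => {0}
  | a :: l => ⋃ w ∈ haddList l, hadd a w

-- Auxiliary lemmas

lemma abs_of_phi {z : ℂ} (hz : z ∈ Phi) (h0 : z ≠ 0) : ‖z‖ = 1 := by
  rcases hz with h | h
  · simpa [unitCircle] using h
  · exact absurd h h0

lemma neg_mem_phi {z : ℂ} (hz : z ∈ Phi) : -z ∈ Phi := by
  rcases hz with h | h
  · left; simpa [unitCircle] using h
  · right; simp at h; simp [h]

lemma haddList_singleton (a : ℂ) : haddList [a] = {a} := by
  have : haddList [a] = ⋃ w ∈ haddList [], hadd a w := rfl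
  rw [this]
  simp only [haddList, mem_singleton_iff, iUnion_iUnion_eq_left]
  by_cases h : a = 0
  · subst h; unfold hadd; simp
  · unfold hadd; rw [if_neg h, if_pos rfl]

lemma mem_haddList_cons {w a : ℂ} {l : List ℂ} :
    w ∈ haddList (a :: l) ↔ ∃ w' ∈ haddList l, w ∈ hadd a w' := by
  simp [haddList]

-- nonneg combination of non-antipodal units is nonzero
lemma comb_ne_zero {x y : ℂ} (hx : ‖x‖ = 1) (hy : ‖y‖ = 1)
    (hxy : y ≠ -x) {a b : ℝ} (ha : 0 ≤ a) (hb : 0 ≤ b) (hab : 0 < a + b) :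
    (a : ℂ) * x + (b : ℂ) * y ≠ 0 := by
  intro h
  have hax : (a : ℂ) * x = -((b : ℂ) * y) := by linear_combination h
  have habs : a = b := by
    have := congrArg (‖·‖) hax
    simpa [map_mul, hx, hy, Complex.norm_of_nonneg ha, Complex.norm_of_nonneg hb, abs_of_nonneg ha, abs_of_nonneg hb] using this
  subst habs
  have ha' : 0 < a := by linarith
  have : y = -x := by
    have ha'' : (a : ℂ) ≠ 0 := by exact_mod_cast ha'.ne'
    have h2 : (a : ℂ) * y = (a : ℂ) * (-x) := by linear_combination h
    exact mul_left_cancel₀ ha'' h2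
  exact hxy this

lemma zero_not_mem_smallArc {x y : ℂ} (hx : ‖x‖ = 1) (hy : ‖y‖ = 1)
    (hxy : y ≠ -x) : (0 : ℂ) ∉ smallArc x y := by
  rintro ⟨a, b, ha, hb, hab, heq⟩
  have hne := comb_ne_zero hx hy hxy ha hb hab
  have : ((‖(a : ℂ) * x + (b : ℂ) * y‖ : ℝ) : ℂ) ≠ 0 := by
    simpa using hne
  rw [eq_comm, div_eq_zero_iff] at heq
  tauto

lemma left_mem_smallArc {x y : ℂ} (hx : ‖x‖ = 1) : x ∈ smallArc x y := by
  refine ⟨1, 0, by norm_num, by norm_num, by norm_num, ?_⟩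
  simp [hx]

lemma right_mem_smallArc {x y : ℂ} (hy : ‖y‖ = 1) : y ∈ smallArc x y := by
  refine ⟨0, 1, by norm_num, by norm_num, by norm_num, ?_⟩
  simp [hy]

-- b ∈ hadd p b for p ∈ Phi, b a unit
lemma self_mem_hadd {p b : ℂ} (hp : p ∈ Phi) (hb : ‖b‖ = 1) : b ∈ hadd p b := by
  unfold hadd
  split_ifs with h1 h2 h3
  · simp
  · simp [h2] at hb
  · left; simpa [unitCircle] using hb
  · exact right_mem_smallArc hb

lemma zero_mem_hadd_neg {a : ℂ} (ha : a ≠ 0) : (0 : ℂ) ∈ hadd a (-a) := by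
  unfold hadd
  split_ifs with h1 h2
  · exact absurd h1 ha
  · simp at h2; exact absurd h2 ha
  · right; rfl
  · simp at *
lemma haddList_pair (b c : ℂ) : haddList [b, c] = hadd b c := by
  have : haddList [b, c] = ⋃ w ∈ haddList [c], hadd b w := rfl
  rw [this, haddList_singleton]
  simp

lemma self_mem_hadd_left {b c : ℂ} (hc : c ∈ Phi) (hb : ‖b‖ = 1) :
    b ∈ hadd b c := by
  have hb0 : b ≠ 0 := fun h => by simp [h] at hb
  unfold hadd
  rw [if_neg hb0]
  split_ifs with h1 h2
  · simp
  · left; simpa [unitCircle] using hb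
  · exact left_mem_smallArc hb

lemma antipodal_of_comb {α β : ℝ} {a b : ℂ} (ha : ‖a‖ = 1)
    (hb : ‖b‖ = 1) (hα : 0 ≤ α) (hβ : 0 ≤ β)
    (hsum : (α : ℂ) * a + (β : ℂ) * b = 0) (hne : (α : ℂ) * a ≠ 0) : b = -a := by
  have hα0 : α ≠ 0 := fun h => by simp [h] at hne
  have hαpos : 0 < α := lt_of_le_of_ne hα (Ne.symm hα0)
  have habs : β = α := by
    have := congrArg (‖·‖) (show (β : ℂ) * b = -((α : ℂ) * a) by linear_combination hsum)
    simpa [map_mul, ha, hb, Complex.norm_of_nonneg hα, Complex.norm_of_nonneg hβ, abs_of_nonneg hα, abs_of_nonneg hβ] using this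
  rw [habs] at hsum
  have hc : (α : ℂ) ≠ 0 := by exact_mod_cast hα0
  have : (α : ℂ) * b = (α : ℂ) * (-a) := by linear_combination hsum
  exact mul_left_cancel₀ hc this

/-- If a nonneg combination of three elements of Φ vanishes nontrivially,
then 0 is in their hypersum. -/
lemma zero_mem_triple {a b c : ℂ} (ha : a ∈ Phi) (hb : b ∈ Phi) (hc : c ∈ Phi)
    {α β γ : ℝ} (hα : 0 ≤ α) (hβ : 0 ≤ β) (hγ : 0 ≤ γ)
    (hsum : (α : ℂ) * a + (β : ℂ) * b + (γ : ℂ) * c = 0)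
    (hne : ¬((α : ℂ) * a = 0 ∧ (β : ℂ) * b = 0 ∧ (γ : ℂ) * c = 0)) :
    (0 : ℂ) ∈ haddList [a, b, c] := by
  have hmem : ∀ w : ℂ, w ∈ hadd b c → (0 : ℂ) ∈ hadd a w → (0 : ℂ) ∈ haddList [a, b, c] := by
    intro w hw h0
    rw [mem_haddList_cons]
    exact ⟨w, by rwa [haddList_pair], h0⟩
  by_cases h1 : (α : ℂ) * a = 0
  · -- T1 = 0 : β b + γ c = 0 nontrivially, so c = -b (both nonzero)
    have hsum' : (β : ℂ) * b + (γ : ℂ) * c = 0 := by linear_combination hsum - h1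
    have h2 : (β : ℂ) * b ≠ 0 := by
      intro h2
      have h3 : (γ : ℂ) * c = 0 := by linear_combination hsum' - h2
      exact hne ⟨h1, h2, h3⟩
    have hb0 : b ≠ 0 := fun h => h2 (by simp [h])
    have hc0 : c ≠ 0 := by
      intro h
      have h3 : (γ : ℂ) * c = 0 := by simp [h]
      exact h2 (by linear_combination hsum' - h3)
    have hcb : c = -b :=
      antipodal_of_comb (abs_of_phi hb hb0) (abs_of_phi hc hc0) hβ hγ hsum' h2
    have hPhi : hadd b c = Phi := by
      unfold hadd; rw [if_neg hb0, if_neg hc0, if_pos hcb]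
    by_cases ha0 : a = 0
    · refine hmem 0 ?_ ?_
      · rw [hPhi]; right; rfl
      · unfold hadd; rw [if_pos ha0]; simp
    · refine hmem (-a) ?_ (zero_mem_hadd_neg ha0)
      · rw [hPhi]; exact neg_mem_phi ha
  · -- T1 ≠ 0 : a is a nonzero unit, α > 0
    have ha0 : a ≠ 0 := fun h => h1 (by simp [h])
    have hα0 : α ≠ 0 := fun h => h1 (by simp [h])
    have hau : ‖a‖ = 1 := abs_of_phi ha ha0
    by_cases h2 : (β : ℂ) * b = 0
    · -- T2 = 0 : α a + γ c = 0, so c = -a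
      have hsum' : (α : ℂ) * a + (γ : ℂ) * c = 0 := by linear_combination hsum - h2
      have hc0 : c ≠ 0 := by
        intro h
        exact h1 (by simpa [h] using hsum')
      have hca : c = -a := antipodal_of_comb hau (abs_of_phi hc hc0) hα hγ hsum' h1
      refine hmem c (self_mem_hadd hb (abs_of_phi hc hc0)) ?_
      rw [hca]; exact zero_mem_hadd_neg ha0
    · -- T1 ≠ 0, T2 ≠ 0
      have hb0 : b ≠ 0 := fun h => h2 (by simp [h])
      have hbu : ‖b‖ = 1 := abs_of_phi hb hb0
      by_cases h3 : (γ : ℂ) * c = 0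
      · -- b = -a
        have hsum' : (α : ℂ) * a + (β : ℂ) * b = 0 := by linear_combination hsum - h3
        have hba : b = -a := antipodal_of_comb hau hbu hα hβ hsum' h1
        refine hmem b (self_mem_hadd_left hc hbu) ?_
        rw [hba]; exact zero_mem_hadd_neg ha0
      · -- all three terms nonzero
        have hc0 : c ≠ 0 := fun h => h3 (by simp [h])
        have hcu : ‖c‖ = 1 := abs_of_phi hc hc0
        by_cases hcb : c = -b
        · have hPhi : hadd b c = Phi := by
            unfold hadd; rw [if_neg hb0, if_neg hc0, if_pos hcb]
          refine hmem (-a) ?_ (zero_mem_hadd_neg ha0)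
          rw [hPhi]; exact neg_mem_phi ha
        · have hαpos : 0 < α := lt_of_le_of_ne hα (fun h => hα0 h.symm)
          have hβpos : 0 < β := by
            rcases lt_of_le_of_ne hβ (fun h => h2 (by simp [← h])) with h; exact h
          have harc : -a ∈ smallArc b c := by
            refine ⟨β, γ, hβ, hγ, by linarith, ?_⟩
            have hv : (β : ℂ) * b + (γ : ℂ) * c = -((α : ℂ) * a) := by linear_combination hsum
            rw [hv]
            rw [show ‖-((α : ℂ) * a)‖ = α by
              simp [map_mul, hau, Complex.norm_of_nonneg hα, hα]]
            have : (α : ℂ) ≠ 0 := by exact_mod_cast hα0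
            field_simp
          have harc' : -a ∈ hadd b c := by
            unfold hadd; rw [if_neg hb0, if_neg hc0, if_neg hcb]; exact harc
          exact hmem (-a) harc' (zero_mem_hadd_neg ha0)
/-- Structure of elements of an iterated hypersum of elements of Φ. -/
lemma haddList_structure : ∀ (n : ℕ) (x : Fin n → ℂ), (∀ k, x k ∈ Phi) → ∀ w : ℂ,
    w ∈ haddList (List.ofFn x) →
    (∃ i j : Fin n, i < j ∧ x i ≠ 0 ∧ x j = -x i) ∨
    (∃ c : Fin n → ℝ, (∀ i, 0 ≤ c i) ∧ (∑ i, (c i : ℂ) * x i) = 0 ∧ ∃ i, c i ≠ 0 ∧ x i ≠ 0) ∨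
    (w = 0 ∧ ∀ i, x i = 0) ∨
    (w ≠ 0 ∧ ∃ c : Fin n → ℝ, (∀ i, 0 ≤ c i) ∧ (∑ i, (c i : ℂ) * x i) ≠ 0 ∧
      w * ((‖∑ i, (c i : ℂ) * x i‖ : ℝ) : ℂ) = ∑ i, (c i : ℂ) * x i) := by
  intro n
  induction n with
  | zero =>
    intro x hx w hw
    right; right; left
    constructor
    · simpa [haddList, List.ofFn_zero] using hw
    · exact fun i => i.elim0
  | succ n ih =>
    intro x hx w hw
    rw [List.ofFn_succ, mem_haddList_cons] at hw
    obtain ⟨w', hw', hmem⟩ := hw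
    rcases ih (fun i => x i.succ) (fun i => hx _) w' hw' with
      ⟨i, j, hij, hi0, hji⟩ | ⟨c, hc, hsum, i0, hci0, hxi0⟩ | ⟨hw0, hall⟩ | ⟨hw0, c, hc, hne, heq⟩
    · exact Or.inl ⟨i.succ, j.succ, Fin.succ_lt_succ_iff.2 hij, hi0, hji⟩
    · refine Or.inr (Or.inl ⟨Fin.cases 0 c, ?_, ?_, ⟨i0.succ, by simpa using hci0, hxi0⟩⟩)
      · intro i
        induction i using Fin.cases <;> simp [hc _]
      · rw [Fin.sum_univ_succ]
        simpa using hsum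
    · -- w' = 0 and tail all zero
      subst hw0
      unfold hadd at hmem
      by_cases hx0 : x 0 = 0
      · rw [if_pos hx0] at hmem
        refine Or.inr (Or.inr (Or.inl ⟨by simpa using hmem, ?_⟩))
        intro i
        induction i using Fin.cases
        · exact hx0
        · exact hall _
      · rw [if_neg hx0, if_pos rfl] at hmem
        rw [mem_singleton_iff] at hmem
        subst hmem
        refine Or.inr (Or.inr (Or.inr ⟨hx0, Fin.cases 1 0, ?_, ?_, ?_⟩))
        · intro i; induction i using Fin.cases <;> simp
        · rw [Fin.sum_univ_succ]; simpa using hx0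
        · rw [Fin.sum_univ_succ]
          simp [abs_of_phi (hx 0) hx0]
    · -- w' ≠ 0, w' is the phase of v = ∑ c i * x i.succ
      set v : ℂ := ∑ i, (c i : ℂ) * x i.succ with hv
      have hvabs : ((‖v‖ : ℝ) : ℂ) ≠ 0 := by
        simpa using hne
      have hvabs' : ‖v‖ ≠ 0 := by exact_mod_cast hvabs
      have hw'abs : ‖w'‖ = 1 := by
        have h1 := congrArg (‖·‖) heq
        rw [norm_mul] at h1
        rw [Complex.norm_of_nonneg (norm_nonneg v)] at h1
        have h2 : ‖w'‖ * ‖v‖ = 1 * ‖v‖ := by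
          rw [h1, one_mul]
        exact mul_right_cancel₀ hvabs' h2
      unfold hadd at hmem
      by_cases hx0 : x 0 = 0
      · rw [if_pos hx0, mem_singleton_iff] at hmem
        subst hmem
        refine Or.inr (Or.inr (Or.inr ⟨hw0, Fin.cases 0 c, ?_, ?_, ?_⟩))
        · intro i; induction i using Fin.cases <;> simp [hc _]
        · rw [Fin.sum_univ_succ]
          simp only [Fin.cases_zero, Fin.cases_succ, Complex.ofReal_zero, zero_mul, zero_add]
          rw [← hv]; exact hne
        · rw [Fin.sum_univ_succ]
          simp only [Fin.cases_zero, Fin.cases_succ, Complex.ofReal_zero, zero_mul, zero_add]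
          rw [← hv]; exact heq
      · rw [if_neg hx0, if_neg hw0] at hmem
        by_cases hwa : w' = -x 0
        · -- positive combination vanishes: Z case
          refine Or.inr (Or.inl ⟨Fin.cases (‖v‖) c, ?_, ?_, 0, ?_, hx0⟩)
          · intro i
            induction i using Fin.cases <;> simp [hc _, norm_nonneg]
          · rw [Fin.sum_univ_succ]
            simp only [Fin.cases_zero, Fin.cases_succ]
            rw [← hv]
            have h3 : w' * ((‖v‖ : ℝ) : ℂ) = v := heq
            rw [hwa] at h3
            linear_combination -h3
          · simpa using hvabs'
        · rw [if_neg hwa] at hmem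
          obtain ⟨α, β, hα, hβ, hαβ, hwu⟩ := hmem
          have hx0u : ‖x 0‖ = 1 := abs_of_phi (hx 0) hx0
          have hu : (α : ℂ) * x 0 + (β : ℂ) * w' ≠ 0 :=
            comb_ne_zero hx0u hw'abs hwa hα hβ hαβ
          set u : ℂ := (α : ℂ) * x 0 + (β : ℂ) * w' with hudef
          have huabs : ((‖u‖ : ℝ) : ℂ) ≠ 0 := by simpa using hu
          have hwne : w ≠ 0 := by
            rw [hwu]
            exact div_ne_zero hu huabs
          have hkey : ((β : ℂ) / ((‖v‖ : ℝ) : ℂ)) * v = (β : ℂ) * w' := by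
            field_simp
            linear_combination (-β : ℂ) * heq
          set c' : Fin (n + 1) → ℝ := Fin.cases α (fun i => (β / ‖v‖) * c i)
            with hc'def
          have hsum2 : (∑ i, (c' i : ℂ) * x i) = u := by
            rw [Fin.sum_univ_succ]
            simp only [hc'def, Fin.cases_zero, Fin.cases_succ, Complex.ofReal_mul,
              Complex.ofReal_div, mul_assoc]
            rw [← Finset.mul_sum, ← hv, hkey]
          refine Or.inr (Or.inr (Or.inr ⟨hwne, c', ?_, ?_, ?_⟩))
          · intro i
            induction i using Fin.cases
            · simpa [hc'def] using hα
            · simp only [hc'def, Fin.cases_succ]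
              exact mul_nonneg (div_nonneg hβ (norm_nonneg v)) (hc _)
          · rw [hsum2]; exact hu
          · rw [hsum2, hwu]
            exact div_mul_cancel₀ u huabs
lemma final_of_three {n : ℕ} (x : Fin n → ℂ) (hx : ∀ k, x k ∈ Phi) {i j k : Fin n}
    (hij : i ≠ j) (hik : i ≠ k) (hjk : j ≠ k) {α β γ : ℝ}
    (hα : 0 ≤ α) (hβ : 0 ≤ β) (hγ : 0 ≤ γ)
    (hsum : (α : ℂ) * x i + (β : ℂ) * x j + (γ : ℂ) * x k = 0)
    (hne : ¬((α : ℂ) * x i = 0 ∧ (β : ℂ) * x j = 0 ∧ (γ : ℂ) * x k = 0)) :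
    ∃ j' k' l' : Fin n, j' < k' ∧ k' < l' ∧ (0 : ℂ) ∈ haddList [x j', x k', x l'] := by
  have key : ∀ (p q r : Fin n), p < q → q < r →
      ∀ (α' β' γ' : ℝ), 0 ≤ α' → 0 ≤ β' → 0 ≤ γ' →
      ((α' : ℂ) * x p + (β' : ℂ) * x q + (γ' : ℂ) * x r = 0) →
      ¬((α' : ℂ) * x p = 0 ∧ (β' : ℂ) * x q = 0 ∧ (γ' : ℂ) * x r = 0) →
      ∃ j' k' l' : Fin n, j' < k' ∧ k' < l' ∧ (0 : ℂ) ∈ haddList [x j', x k', x l'] :=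
    fun p q r hpq hqr α' β' γ' h1 h2 h3 h4 h5 =>
      ⟨p, q, r, hpq, hqr, zero_mem_triple (hx p) (hx q) (hx r) h1 h2 h3 h4 h5⟩
  rcases hij.lt_or_gt with h1 | h1 <;> rcases hik.lt_or_gt with h2 | h2 <;>
    rcases hjk.lt_or_gt with h3 | h3
  · exact key i j k h1 h3 α β γ hα hβ hγ hsum hne
  · exact key i k j h2 h3 α γ β hα hγ hβ (by linear_combination hsum) (by tauto)
  · exact absurd (h2.trans h1) (asymm h3)
  · exact key k i j h2 h1 γ α β hγ hα hβ (by linear_combination hsum) (by tauto)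
  · exact key j i k h1 h2 β α γ hβ hα hγ (by linear_combination hsum) (by tauto)
  · exact absurd (h3.trans h1) (asymm h2)
  · exact key j k i h3 h2 β γ α hβ hγ hα (by linear_combination hsum) (by tauto)
  · exact key k j i h3 h1 γ β α hγ hβ hα (by linear_combination hsum) (by tauto)

lemma exists_third {n : ℕ} (hn : 3 ≤ n) (i j : Fin n) : ∃ k : Fin n, k ≠ i ∧ k ≠ j := by
  have hcard : 0 < (({i, j} : Finset (Fin n))ᶜ).card := by
    rw [Finset.card_compl]
    have h1 : ({i, j} : Finset (Fin n)).card ≤ 2 :=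
      (Finset.card_insert_le _ _).trans (by simp)
    have h2 : Fintype.card (Fin n) = n := Fintype.card_fin n
    omega
  obtain ⟨k, hk⟩ := Finset.card_pos.mp hcard
  simp only [Finset.mem_compl, Finset.mem_insert, Finset.mem_singleton, not_or] at hk
  exact ⟨k, hk.1, hk.2⟩

lemma final_of_pair {n : ℕ} (hn : 3 ≤ n) (x : Fin n → ℂ) (hx : ∀ k, x k ∈ Phi)
    {i j : Fin n} (hij : i ≠ j) {α β : ℝ} (hα : 0 ≤ α) (hβ : 0 ≤ β)
    (hsum : (α : ℂ) * x i + (β : ℂ) * x j = 0)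
    (hne : ¬((α : ℂ) * x i = 0 ∧ (β : ℂ) * x j = 0)) :
    ∃ j' k' l' : Fin n, j' < k' ∧ k' < l' ∧ (0 : ℂ) ∈ haddList [x j', x k', x l'] := by
  obtain ⟨k, hki, hkj⟩ := exists_third hn i j
  refine final_of_three x hx hij (Ne.symm hki) (Ne.symm hkj) hα hβ (le_refl (0 : ℝ))
    ?_ ?_
  · push_cast; linear_combination hsum
  · push_cast; simp only [zero_mul]; tauto
lemma caratheodory_step {n : ℕ} (hn : 3 ≤ n) (x : Fin n → ℂ) (hx : ∀ k, x k ∈ Phi)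
    (c : Fin n → ℝ) (hc : ∀ i, 0 ≤ c i) (hsum : (∑ i, (c i : ℂ) * x i) = 0)
    (hex : ∃ i, c i ≠ 0 ∧ x i ≠ 0) :
    ∃ j' k' l' : Fin n, j' < k' ∧ k' < l' ∧ (0 : ℂ) ∈ haddList [x j', x k', x l'] := by
  classical
  obtain ⟨i0, hci0, hxi0⟩ := hex
  set c' : Fin n → ℝ := fun i => if x i = 0 then 0 else c i with hc'def
  have hc'nonneg : ∀ i, 0 ≤ c' i := by
    intro i; simp only [hc'def]; split
    · exact le_refl 0
    · exact hc i
  have hc'ne : ∀ i, c' i ≠ 0 → x i ≠ 0 := by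
    intro i hi
    simp only [hc'def] at hi
    intro h; rw [if_pos h] at hi; exact hi rfl
  have hc'i0 : c' i0 ≠ 0 := by
    simp only [hc'def]; rw [if_neg hxi0]; exact hci0
  have hsum' : ∑ i, (c' i : ℂ) * x i = 0 := by
    rw [← hsum]
    apply Finset.sum_congr rfl
    intro i _
    by_cases h : x i = 0
    · simp [h]
    · simp only [hc'def]; rw [if_neg h]
  set t : Finset (Fin n) := Finset.univ.filter (fun i => c' i ≠ 0) with ht
  have hi0t : i0 ∈ t := by simp [ht, hc'i0]
  have h0 : (0 : ℂ) ∈ convexHull ℝ (x '' {i | c' i ≠ 0}) := by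
    have hpos : 0 < ∑ i ∈ t, c' i :=
      Finset.sum_pos' (fun i _ => hc'nonneg i)
        ⟨i0, hi0t, lt_of_le_of_ne (hc'nonneg i0) (Ne.symm hc'i0)⟩
    have hmem := t.centerMass_mem_convexHull (w := c') (z := x)
      (fun i _ => hc'nonneg i) hpos
      (fun i hi => Set.mem_image_of_mem x (Finset.mem_filter.mp hi).2)
    have hzero : t.centerMass c' x = 0 := by
      rw [Finset.centerMass]
      have hs : ∑ i ∈ t, c' i • x i = 0 := by
        rw [Finset.sum_subset (Finset.subset_univ t)]
        · rw [← hsum']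
          exact Finset.sum_congr rfl fun i _ => Complex.real_smul
        · intro i _ hit
          have : c' i = 0 := by
            by_contra hne
            exact hit (by simp [ht, hne])
          simp [this]
      rw [hs, smul_zero]
    rwa [hzero] at hmem
  obtain ⟨ι, hι, z, wt, hrange, hindep, hwpos, hwsum, hzsum⟩ :=
    eq_pos_convex_span_of_mem_convexHull h0
  letI := hι
  have hidx : ∀ i : ι, ∃ a : Fin n, c' a ≠ 0 ∧ x a = z i := by
    intro i
    rcases hrange (Set.mem_range_self i) with ⟨a, ha, hxa⟩
    exact ⟨a, ha, hxa⟩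
  choose idx hidx1 hidx2 using hidx
  have hxne : ∀ i : ι, x (idx i) ≠ 0 := fun i => hc'ne _ (hidx1 i)
  have hinj : Function.Injective idx := by
    intro a b hab
    apply hindep.injective
    rw [← hidx2 a, ← hidx2 b, hab]
  have hcard : Fintype.card ι ≤ 3 := by
    have h1 := hindep.card_le_finrank_succ
    have h2 : Module.finrank ℝ (vectorSpan ℝ (Set.range z)) ≤ 2 := by
      have h3 := Submodule.finrank_le (vectorSpan ℝ (Set.range z))
      rwa [Complex.finrank_real_complex] at h3
    omega
  have hm : Fintype.card ι = 0 ∨ Fintype.card ι = 1 ∨ Fintype.card ι = 2 ∨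
      Fintype.card ι = 3 := by omega
  rcases hm with hm | hm | hm | hm
  · -- empty: sum of weights is 1, contradiction
    haveI : IsEmpty ι := Fintype.card_eq_zero_iff.mp hm
    rw [Finset.univ_eq_empty, Finset.sum_empty] at hwsum
    norm_num at hwsum
  · -- one point: it would be 0, but it is a unit
    have e := (Fintype.equivFinOfCardEq hm).symm
    have h1 : ∑ j : Fin 1, wt (e j) • z (e j) = 0 := by
      rw [Equiv.sum_comp e (fun i => wt i • z i)]; exact hzsum
    rw [Fin.sum_univ_one] at h1
    rcases smul_eq_zero.mp h1 with h | h
    · exact absurd h (hwpos (e 0)).ne'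
    · rw [← hidx2 (e 0)] at h
      exact absurd h (hxne (e 0))
  · -- two points: antipodal pair
    have e := (Fintype.equivFinOfCardEq hm).symm
    have h1 : ∑ j : Fin 2, wt (e j) • z (e j) = 0 := by
      rw [Equiv.sum_comp e (fun i => wt i • z i)]; exact hzsum
    rw [Fin.sum_univ_two] at h1
    have hne01 : idx (e 0) ≠ idx (e 1) := fun h =>
      absurd (e.injective (hinj h)) (by decide)
    have hsum2 : ((wt (e 0) : ℝ) : ℂ) * x (idx (e 0)) +
        ((wt (e 1) : ℝ) : ℂ) * x (idx (e 1)) = 0 := by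
      rw [hidx2, hidx2, ← Complex.real_smul, ← Complex.real_smul]
      exact h1
    refine final_of_pair hn x hx hne01 (hwpos (e 0)).le (hwpos (e 1)).le hsum2 ?_
    rintro ⟨h, -⟩
    rcases mul_eq_zero.mp h with h | h
    · exact (hwpos (e 0)).ne' (by exact_mod_cast h)
    · exact hxne (e 0) h
  · -- three points
    have e := (Fintype.equivFinOfCardEq hm).symm
    have h1 : ∑ j : Fin 3, wt (e j) • z (e j) = 0 := by
      rw [Equiv.sum_comp e (fun i => wt i • z i)]; exact hzsum
    rw [Fin.sum_univ_three] at h1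
    have hne01 : idx (e 0) ≠ idx (e 1) := fun h =>
      absurd (e.injective (hinj h)) (by decide)
    have hne02 : idx (e 0) ≠ idx (e 2) := fun h =>
      absurd (e.injective (hinj h)) (by decide)
    have hne12 : idx (e 1) ≠ idx (e 2) := fun h =>
      absurd (e.injective (hinj h)) (by decide)
    have hsum3 : ((wt (e 0) : ℝ) : ℂ) * x (idx (e 0)) +
        ((wt (e 1) : ℝ) : ℂ) * x (idx (e 1)) +
        ((wt (e 2) : ℝ) : ℂ) * x (idx (e 2)) = 0 := by
      rw [hidx2, hidx2, hidx2, ← Complex.real_smul, ← Complex.real_smul,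
        ← Complex.real_smul]
      exact h1
    refine final_of_three x hx hne01 hne02 hne12 (hwpos (e 0)).le (hwpos (e 1)).le
      (hwpos (e 2)).le hsum3 ?_
    rintro ⟨h, -, -⟩
    rcases mul_eq_zero.mp h with h | h
    · exact (hwpos (e 0)).ne' (by exact_mod_cast h)
    · exact hxne (e 0) h

/-- If `x ∈ Φⁿ \ {0}`, `n ≥ 3`, and `0 ∈ x₁ ⊞ ⋯ ⊞ xₙ`, then there are
indices `j < k < ℓ` with `0 ∈ x_j ⊞ x_k ⊞ x_ℓ`. -/
theorem exists_triple_of_zero_mem (n : ℕ) (hn : 3 ≤ n) (x : Fin n → ℂ)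
    (hx : ∀ k, x k ∈ Phi) (hx0 : x ≠ 0)
    (h : (0 : ℂ) ∈ haddList (List.ofFn x)) :
    ∃ j k l : Fin n, j < k ∧ k < l ∧ (0 : ℂ) ∈ haddList [x j, x k, x l] := by
  rcases haddList_structure n x hx 0 h with
    ⟨i, j, hij, hi0, hji⟩ | ⟨c, hc, hsum, hex⟩ | ⟨-, hall⟩ | ⟨h0, -⟩
  · refine final_of_pair hn x hx hij.ne (zero_le_one) (zero_le_one) ?_ ?_
    · push_cast
      rw [hji]; ring
    · push_cast
      simp [hi0]
  · exact caratheodory_step hn x hx c hc hsum hex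
  · exact absurd (funext hall) hx0
  · exact absurd rfl h0
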